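/- Let X be a set and S an arbitrary (not necessarily finite) subset of the free monoid ⟨X⟩. Then there is exactly one overlap-free subset T ⊆ ⟨X⟩\{1} which is inverse-equivalent to S, namely the set of nonidentity elements w of ⟨X⟩ which become invertible in ⟨X : i(S)⟩ but admit no factorization into two nonidentity elements of ⟨X⟩ that become invertible in ⟨X : i(S)⟩. -/

import Mathlib

namespace AdjoinInverses

variable {X : Type*}

/-- The embedding of the free monoid on `X` into the free monoid on `X ⊕ S`. -/
def emb (S : Set (FreeMonoid X)) : FreeMonoid X →* FreeMonoid (X ⊕ S) :=
  FreeMonoid.map Sum.inl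

/-- The generator `i(w)` corresponding to `w ∈ S`. -/
def igen (S : Set (FreeMonoid X)) (w : S) : FreeMonoid (X ⊕ S) :=
  FreeMonoid.of (Sum.inr w)

/-- The defining relations `w ⬝ i(w) = 1` and `i(w) ⬝ w = 1` for `w ∈ S`. -/
inductive InvRel (S : Set (FreeMonoid X)) : FreeMonoid (X ⊕ S) → FreeMonoid (X ⊕ S) → Prop
  | mul_inv (w : S) : InvRel S (emb S w.1 * igen S w) 1
  | inv_mul (w : S) : InvRel S (igen S w * emb S w.1) 1

/-- The congruence generated by the defining relations. -/
def invCon (S : Set (FreeMonoid X)) : Con (FreeMonoid (X ⊕ S)) := conGen (InvRel S)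

/-- The monoid `⟨X : i(S)⟩` obtained from the free monoid on `X` by universally
adjoining a two-sided inverse to each element of `S`. -/
def AdjInv (S : Set (FreeMonoid X)) : Type _ := (invCon S).Quotient

instance (S : Set (FreeMonoid X)) : Monoid (AdjInv S) := Con.monoid _

/-- The natural homomorphism `⟨X⟩ → ⟨X : i(S)⟩`. -/
def natHom (S : Set (FreeMonoid X)) : FreeMonoid X →* AdjInv S :=
  ((invCon S).mk').comp (emb S)

/-- The adjoined inverse `i(w)`, as an element of `⟨X : i(S)⟩`. -/
def invElt (S : Set (FreeMonoid X)) (w : S) : AdjInv S :=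
  (invCon S).mk' (igen S w)

/-- `S` and `S'` are inverse-equivalent: each element of `S'` becomes invertible in
`⟨X : i(S)⟩` and each element of `S` becomes invertible in `⟨X : i(S')⟩`. -/
def InvEquiv (S S' : Set (FreeMonoid X)) : Prop :=
  (∀ w ∈ S', IsUnit (natHom S w)) ∧ ∀ w ∈ S, IsUnit (natHom S' w)

/-- Two (nonidentity) elements of the free monoid overlap: one can be written `a*b`
and the other `b*c` with `b ≠ 1` and at most one of `a`, `c` equal to `1`. -/
def Overlap (u v : FreeMonoid X) : Prop :=
  ∃ a b c : FreeMonoid X, b ≠ 1 ∧ (a ≠ 1 ∨ c ≠ 1) ∧ u = a * b ∧ v = b * c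

/-- A set `T` is overlap-free if no pair of elements of `T` (distinct or not) overlap. -/
def OverlapFree (T : Set (FreeMonoid X)) : Prop :=
  ∀ u ∈ T, ∀ v ∈ T, ¬ Overlap u v

/-! ### Auxiliary development -/


theorem natHom_apply (S : Set (FreeMonoid X)) (w : FreeMonoid X) :
    natHom S w = (invCon S).mk' (emb S w) := rfl

theorem mk'_eq_one_of_rel {S : Set (FreeMonoid X)} {u : FreeMonoid (X ⊕ S)}
    (h : invCon S u 1) : (invCon S).mk' u = 1 := by
  have h1 : ((invCon S).mk' u : (invCon S).Quotient) = (invCon S).mk' 1 := (Con.eq _).mpr h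
  simpa using h1

theorem mul_igen_rel (S : Set (FreeMonoid X)) (t : S) :
    (invCon S).mk' (emb S t.1) * (invCon S).mk' (igen S t) = 1 := by
  rw [← map_mul]
  exact mk'_eq_one_of_rel (ConGen.Rel.of _ _ (InvRel.mul_inv t))

theorem igen_mul_rel (S : Set (FreeMonoid X)) (t : S) :
    (invCon S).mk' (igen S t) * (invCon S).mk' (emb S t.1) = 1 := by
  rw [← map_mul]
  exact mk'_eq_one_of_rel (ConGen.Rel.of _ _ (InvRel.inv_mul t))

theorem isUnit_natHom_of_mem {S : Set (FreeMonoid X)} {w : FreeMonoid X} (h : w ∈ S) :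
    IsUnit (natHom S w) :=
  ⟨⟨natHom S w, (invCon S).mk' (igen S ⟨w, h⟩), mul_igen_rel S ⟨w, h⟩, igen_mul_rel S ⟨w, h⟩⟩, rfl⟩

/-- The transfer homomorphism. -/
noncomputable def trHom {S S' : Set (FreeMonoid X)} (h : ∀ s ∈ S, IsUnit (natHom S' s)) :
    AdjInv S →* AdjInv S' :=
  (invCon S).lift (FreeMonoid.lift (Sum.elim (fun x => natHom S' (FreeMonoid.of x))
      (fun t : S => (((h t.1 t.2).unit⁻¹ : (AdjInv S')ˣ) : AdjInv S')))) (by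
    set F := FreeMonoid.lift (Sum.elim (fun x => natHom S' (FreeMonoid.of x))
      (fun t : S => (((h t.1 t.2).unit⁻¹ : (AdjInv S')ˣ) : AdjInv S'))) with hF
    have hemb : ∀ w : FreeMonoid X, F (emb S w) = natHom S' w := by
      intro w
      have : F.comp (emb S) = natHom S' := FreeMonoid.hom_eq (fun x => rfl)
      exact DFunLike.congr_fun this w
    have higen : ∀ t : S, F (igen S t) = ((h t.1 t.2).unit⁻¹ : (AdjInv S')ˣ) := fun t => rfl
    refine Con.conGen_le.2 ?_
    rintro x y (⟨t⟩ | ⟨t⟩) <;> rw [Con.ker_rel] <;>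
      rw [map_mul, hemb, higen, map_one]
    · exact (h t.1 t.2).mul_val_inv
    · exact (h t.1 t.2).val_inv_mul)

theorem transfer_isUnit {S S' : Set (FreeMonoid X)} (h : ∀ s ∈ S, IsUnit (natHom S' s))
    {w : FreeMonoid X} (hw : IsUnit (natHom S w)) : IsUnit (natHom S' w) := by
  have key : natHom S' w = trHom h (natHom S w) := by
    have h2 : trHom h (natHom S w) = (FreeMonoid.lift (Sum.elim (fun x => natHom S' (FreeMonoid.of x))
      (fun t : S => (((h t.1 t.2).unit⁻¹ : (AdjInv S')ˣ) : AdjInv S')))) (emb S w) := rfl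
    have h3 : ((FreeMonoid.lift (Sum.elim (fun x => natHom S' (FreeMonoid.of x))
      (fun t : S => (((h t.1 t.2).unit⁻¹ : (AdjInv S')ˣ) : AdjInv S')))).comp (emb S)) = natHom S' :=
      FreeMonoid.hom_eq (fun x => rfl)
    rw [h2]
    exact (DFunLike.congr_fun h3 w).symm
  rw [key]
  exact hw.map _


/-! ### Stage 2 : the rewriting system attached to a set `T` -/

section Rewriting

variable (T : Set (FreeMonoid X))

def r1 (t : T) : List (X ⊕ T) := (FreeMonoid.toList (t : FreeMonoid X)).map Sum.inl ++ [Sum.inr t]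

def r2 (t : T) : List (X ⊕ T) := Sum.inr t :: (FreeMonoid.toList (t : FreeMonoid X)).map Sum.inl

def IsRule (L : List (X ⊕ T)) : Prop := ∃ t : T, L = r1 T t ∨ L = r2 T t

def Step (u v : FreeMonoid (X ⊕ T)) : Prop :=
  ∃ P L Q, IsRule T L ∧ FreeMonoid.toList u = P ++ L ++ Q ∧ FreeMonoid.toList v = P ++ Q

def Normal (u : FreeMonoid (X ⊕ T)) : Prop :=
  ¬ ∃ P L Q, IsRule T L ∧ FreeMonoid.toList u = P ++ L ++ Q

theorem toList_emb (w : FreeMonoid X) :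
    FreeMonoid.toList (emb T w) = (FreeMonoid.toList w).map Sum.inl := rfl

theorem ofList_r1 (t : T) : FreeMonoid.ofList (r1 T t) = emb T t.1 * igen T t := rfl

theorem ofList_r2 (t : T) : FreeMonoid.ofList (r2 T t) = igen T t * emb T t.1 := rfl

theorem rule_ne_nil {L : List (X ⊕ T)} (h : IsRule T L) : L ≠ [] := by
  obtain ⟨t, h | h⟩ := h <;> subst h <;> simp [r1, r2]

theorem inr_mem_rule {t : T} {L : List (X ⊕ T)} (hL : L = r1 T t ∨ L = r2 T t) :
    (Sum.inr t : X ⊕ T) ∈ L := by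
  rcases hL with h | h <;> subst h <;> simp [r1, r2]

theorem mem_of_rule {t : T} {L : List (X ⊕ T)} (hL : L = r1 T t ∨ L = r2 T t) {s : T}
    (hs : (Sum.inr s : X ⊕ T) ∈ L) : s = t := by
  rcases hL with h | h <;> subst h <;> simp [r1, r2] at hs <;> tauto

theorem length_rule {t : T} {L : List (X ⊕ T)} (hL : L = r1 T t ∨ L = r2 T t) :
    L.length = (FreeMonoid.toList (t : FreeMonoid X)).length + 1 := by
  rcases hL with h | h <;> subst h <;> simp [r1, r2]

theorem mk'_ofList_rule {L : List (X ⊕ T)} (h : IsRule T L) :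
    (invCon T).mk' (FreeMonoid.ofList L) = 1 := by
  obtain ⟨t, hL | hL⟩ := h <;> subst hL
  · rw [ofList_r1, map_mul]; exact mul_igen_rel T t
  · rw [ofList_r2, map_mul]; exact igen_mul_rel T t

theorem mk'_eq_of_step {u v : FreeMonoid (X ⊕ T)} (h : Step T u v) :
    (invCon T).mk' u = (invCon T).mk' v := by
  obtain ⟨P, L, Q, hL, hu, hv⟩ := h
  have hu' : u = FreeMonoid.ofList P * FreeMonoid.ofList L * FreeMonoid.ofList Q := by
    rw [← FreeMonoid.ofList_append, ← FreeMonoid.ofList_append, ← hu, FreeMonoid.ofList_toList]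
  have hv' : v = FreeMonoid.ofList P * FreeMonoid.ofList Q := by
    rw [← FreeMonoid.ofList_append, ← hv, FreeMonoid.ofList_toList]
  rw [hu', hv', map_mul, map_mul, map_mul, mk'_ofList_rule T hL, mul_one]

theorem mk'_eq_of_rtg {u v : FreeMonoid (X ⊕ T)} (h : Relation.ReflTransGen (Step T) u v) :
    (invCon T).mk' u = (invCon T).mk' v := by
  induction h with
  | refl => rfl
  | tail _ h ih => exact ih.trans (mk'_eq_of_step T h)

theorem step_mul_left {u v : FreeMonoid (X ⊕ T)} (w) (h : Step T u v) :
    Step T (w * u) (w * v) := by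
  obtain ⟨P, L, Q, hL, hu, hv⟩ := h
  exact ⟨FreeMonoid.toList w ++ P, L, Q, hL, by rw [FreeMonoid.toList_mul, hu]; simp,
    by rw [FreeMonoid.toList_mul, hv]; simp⟩

theorem step_mul_right {u v : FreeMonoid (X ⊕ T)} (w) (h : Step T u v) :
    Step T (u * w) (v * w) := by
  obtain ⟨P, L, Q, hL, hu, hv⟩ := h
  exact ⟨P, L, Q ++ FreeMonoid.toList w, hL, by rw [FreeMonoid.toList_mul, hu]; simp,
    by rw [FreeMonoid.toList_mul, hv]; simp⟩

theorem rtg_mul {u v u' v' : FreeMonoid (X ⊕ T)} (h : Relation.ReflTransGen (Step T) u v)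
    (h' : Relation.ReflTransGen (Step T) u' v') :
    Relation.ReflTransGen (Step T) (u * u') (v * v') := by
  have h1 : Relation.ReflTransGen (Step T) (u * u') (v * u') :=
    Relation.ReflTransGen.lift (fun x => x * u') (fun a b hab => step_mul_right T u' hab) _ _ h
  have h2 : Relation.ReflTransGen (Step T) (v * u') (v * v') :=
    Relation.ReflTransGen.lift (fun x => v * x) (fun a b hab => step_mul_left T v hab) _ _ h'
  exact h1.trans h2

theorem length_lt_of_step {u v : FreeMonoid (X ⊕ T)} (h : Step T u v) :
    (FreeMonoid.toList v).length < (FreeMonoid.toList u).length := by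
  obtain ⟨P, L, Q, hL, hu, hv⟩ := h
  rw [hu, hv]
  have := List.length_pos_iff.mpr (rule_ne_nil T hL)
  simp only [List.length_append]
  omega

theorem normal_of_rtg {u v : FreeMonoid (X ⊕ T)} (hn : Normal T u)
    (h : Relation.ReflTransGen (Step T) u v) : v = u := by
  rcases h.cases_head with h | ⟨c, hc, -⟩
  · exact h.symm
  · obtain ⟨P, L, Q, hL, hu, -⟩ := hc
    exact absurd ⟨P, L, Q, hL, hu⟩ hn

theorem normal_one : Normal T 1 := by
  rintro ⟨P, L, Q, hL, h⟩
  rw [FreeMonoid.toList_one] at h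
  have := rule_ne_nil T hL
  simp only [List.append_assoc] at h
  rcases List.append_eq_nil_iff.mp h.symm with ⟨-, h2⟩
  rcases List.append_eq_nil_iff.mp h2 with ⟨h3, -⟩
  exact this h3

theorem normal_emb (w : FreeMonoid X) : Normal T (emb T w) := by
  rintro ⟨P, L, Q, ⟨t, hL⟩, h⟩
  have hmem : (Sum.inr t : X ⊕ T) ∈ FreeMonoid.toList (emb T w) := by
    rw [h]
    exact List.mem_append.mpr (Or.inl (List.mem_append.mpr (Or.inr (inr_mem_rule T hL))))
  rw [toList_emb] at hmem
  obtain ⟨x, -, hx⟩ := List.mem_map.mp hmem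
  exact absurd hx (by simp)

theorem normal_split {u : FreeMonoid (X ⊕ T)} {Y Z : List (X ⊕ T)}
    (h : FreeMonoid.toList u = Y ++ Z) (hn : Normal T u) :
    Normal T (FreeMonoid.ofList Y) ∧ Normal T (FreeMonoid.ofList Z) := by
  constructor <;> rintro ⟨P, L, Q, hL, hPLQ⟩ <;>
    rw [FreeMonoid.toList_ofList] at hPLQ <;> apply hn
  · exact ⟨P, L, Q ++ Z, hL, by rw [h, hPLQ]; simp⟩
  · exact ⟨Y ++ P, L, Q, hL, by rw [h, hPLQ]; simp⟩

theorem exists_normal (u : FreeMonoid (X ⊕ T)) :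
    ∃ v, Relation.ReflTransGen (Step T) u v ∧ Normal T v := by
  generalize hn : (FreeMonoid.toList u).length = n
  induction n using Nat.strong_induction_on generalizing u with
  | _ n ih =>
    by_cases h : Normal T u
    · exact ⟨u, .refl, h⟩
    · obtain ⟨P, L, Q, hL, hu⟩ := not_not.mp h
      have hstep : Step T u (FreeMonoid.ofList (P ++ Q)) := ⟨P, L, Q, hL, hu, rfl⟩
      subst hn
      obtain ⟨v, hv, hnv⟩ := ih _ (length_lt_of_step T hstep) _ rfl
      exact ⟨v, .head hstep hv, hnv⟩

end Rewriting

/-! ### Stage 3 : confluence -/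

theorem left_prefix_inr {α β : Type*} (p : List (α ⊕ β)) :
    ∀ (p' : List (α ⊕ β)) (r r' : α ⊕ β) (q q' : List (α ⊕ β)),
    (∀ x ∈ p, x.isLeft) → r.isRight → r'.isRight →
    p ++ r :: q = p' ++ r' :: q' →
    (p' = p ∧ r' = r ∧ q' = q) ∨ ∃ m, p' = p ++ r :: m ∧ q = m ++ r' :: q' := by
  induction p with
  | nil =>
    intro p' r r' q q' hp hr hr' h
    cases p' with
    | nil =>
      simp only [List.nil_append, List.cons.injEq] at h
      exact Or.inl ⟨rfl, h.1.symm, h.2.symm⟩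
    | cons y p'' =>
      simp only [List.nil_append, List.cons_append, List.cons.injEq] at h
      exact Or.inr ⟨p'', by simp [h.1], h.2⟩
  | cons x p₀ ih =>
    intro p' r r' q q' hp hr hr' h
    cases p' with
    | nil =>
      exfalso
      simp only [List.cons_append, List.nil_append, List.cons.injEq] at h
      have hx : (x : α ⊕ β).isLeft := hp x (List.mem_cons_self)
      rw [h.1] at hx
      cases r' <;> simp_all
    | cons y p'' =>
      simp only [List.cons_append, List.cons.injEq] at h
      obtain ⟨h1, h2⟩ := h
      rcases ih p'' r r' q q' (fun z hz => hp z (List.mem_cons_of_mem _ hz)) hr hr' h2 with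
        ⟨ha, hb, hc⟩ | ⟨m, hm1, hm2⟩
      · exact Or.inl ⟨by rw [h1, ha], hb, hc⟩
      · exact Or.inr ⟨m, by rw [h1, hm1]; rfl, hm2⟩

theorem ofList_ne_one {α : Type*} {l : List α} (h : l ≠ []) : FreeMonoid.ofList l ≠ 1 := by
  intro hl
  apply h
  have := congrArg FreeMonoid.toList hl
  rwa [FreeMonoid.toList_ofList, FreeMonoid.toList_one] at this

theorem mapinl_inj {α β : Type*} {l₁ l₂ : List α} (h : l₁.map (Sum.inl : α → α ⊕ β) = l₂.map Sum.inl) :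
    l₁ = l₂ :=
  List.map_injective_iff.mpr Sum.inl_injective h

section Rewriting2

variable (T : Set (FreeMonoid X))

theorem toList_coe_ne_nil (h1 : (1 : FreeMonoid X) ∉ T) (t : T) :
    FreeMonoid.toList (t : FreeMonoid X) ≠ [] := by
  intro h
  have ht1 : (t : FreeMonoid X) = 1 := by
    have := congrArg FreeMonoid.ofList h
    rwa [FreeMonoid.ofList_toList] at this
  exact h1 (ht1 ▸ t.2)

theorem coe_eq_of_toList {t s : T}
    (h : FreeMonoid.toList (t : FreeMonoid X) = FreeMonoid.toList (s : FreeMonoid X)) : t = s :=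
  Subtype.ext (by
    have := congrArg FreeMonoid.ofList h
    rwa [FreeMonoid.ofList_toList, FreeMonoid.ofList_toList] at this)

theorem no_overlap (hof : OverlapFree T) {t s : T} {t₁ t₂ s₂ : List X}
    (ht : FreeMonoid.toList (t : FreeMonoid X) = t₁ ++ t₂)
    (hs : FreeMonoid.toList (s : FreeMonoid X) = t₂ ++ s₂)
    (h2 : t₂ ≠ []) : t₁ = [] ∧ s₂ = [] := by
  by_contra hcon
  have hor : t₁ ≠ [] ∨ s₂ ≠ [] := by tauto
  apply hof _ t.2 _ s.2
  refine ⟨FreeMonoid.ofList t₁, FreeMonoid.ofList t₂, FreeMonoid.ofList s₂,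
    ofList_ne_one h2, ?_, ?_, ?_⟩
  · rcases hor with h | h
    · exact Or.inl (ofList_ne_one h)
    · exact Or.inr (ofList_ne_one h)
  · rw [← FreeMonoid.ofList_append, ← ht, FreeMonoid.ofList_toList]
  · rw [← FreeMonoid.ofList_append, ← hs, FreeMonoid.ofList_toList]

theorem rule_infix {L L' a c : List (X ⊕ T)} (hL : IsRule T L) (hL' : IsRule T L')
    (h : L = a ++ L' ++ c) : a = [] ∧ c = [] := by
  obtain ⟨t, hLt⟩ := hL
  obtain ⟨s, hLs⟩ := hL'
  have hmem : (Sum.inr s : X ⊕ T) ∈ L := by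
    rw [h]
    exact List.mem_append.mpr (Or.inl (List.mem_append.mpr (Or.inr (inr_mem_rule T hLs))))
  have hst : s = t := mem_of_rule T hLt hmem
  have hlen : L.length = L'.length := by
    rw [length_rule T hLt, length_rule T hLs, hst]
  have hh := congrArg List.length h
  simp only [List.length_append] at hh
  rw [hlen] at hh
  constructor <;> apply List.eq_nil_of_length_eq_zero <;> omega

theorem overlap_rules (hof : OverlapFree T) (h1 : (1 : FreeMonoid X) ∉ T)
    {a b c L L' : List (X ⊕ T)} (hL : IsRule T L) (hL' : IsRule T L')
    (hab : L = a ++ b) (hbc : L' = b ++ c) (ha : a ≠ []) (hb : b ≠ []) (hc : c ≠ []) :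
    a = c := by
  obtain ⟨t, hLt⟩ := hL
  obtain ⟨s, hLs⟩ := hL'
  rcases hLt with hLt | hLt
  · -- L = r1 t
    have hab' : a ++ b = (FreeMonoid.toList (t : FreeMonoid X)).map Sum.inl ++ [Sum.inr t] := by
      rw [← hab, hLt, r1]
    rcases List.append_eq_append_iff.mp hab' with ⟨d, hd1, hd2⟩ | ⟨d, hd1, hd2⟩
    · -- hd1 : map inl tl = a ++ d, hd2 : b = d ++ [inr t]
      obtain ⟨t₁, t₂, htl, hat, hdt⟩ := List.map_eq_append_iff.mp hd1
      rcases hLs with hLs | hLs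
      · -- L' = r1 s : impossible
        exfalso
        have hbc' : (FreeMonoid.toList (s : FreeMonoid X)).map Sum.inl ++
            Sum.inr s :: ([] : List (X ⊕ T)) = t₂.map Sum.inl ++ Sum.inr t :: c := by
          have : (FreeMonoid.toList (s : FreeMonoid X)).map Sum.inl ++ [Sum.inr s] = b ++ c := by
            rw [← hbc, hLs, r1]
          rw [this, hd2, ← hdt]
          simp
        rcases left_prefix_inr _ _ _ _ _ _ (by simp) (by simp) (by simp) hbc' with ⟨-, -, hq⟩ | ⟨m, -, hq⟩
        · exact hc hq
        · exact absurd hq.symm (by simp)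
      · -- L' = r2 s
        have hbc' : t₂.map Sum.inl ++ Sum.inr t :: c = ([] : List (X ⊕ T)) ++
            Sum.inr s :: (FreeMonoid.toList (s : FreeMonoid X)).map Sum.inl := by
          have : b ++ c = Sum.inr s :: (FreeMonoid.toList (s : FreeMonoid X)).map Sum.inl := by
            rw [← hbc, hLs, r2]
          rw [List.nil_append, ← this, hd2, ← hdt]
          simp
        rcases left_prefix_inr _ _ _ _ _ _ (by simp) (by simp) (by simp) hbc' with ⟨hp, hrr, hq⟩ | ⟨m, hm, -⟩
        · have ht2 : t₂ = [] := by simpa using hp.symm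
          have hst : s = t := Sum.inr.inj hrr
          subst hst
          rw [← hq, ← hat, htl, ht2, List.append_nil]
        · exact absurd hm (by simp)
    · -- hd1 : a = map inl tl ++ d, hd2 : [inr t] = d ++ b
      cases d with
      | cons d0 ds =>
        exfalso
        simp only [List.cons_append, List.cons.injEq] at hd2
        rcases List.append_eq_nil_iff.mp hd2.2.symm with ⟨-, hb0⟩
        exact hb hb0
      | nil =>
        rw [List.append_nil] at hd1
        rw [List.nil_append] at hd2
        rcases hLs with hLs | hLs
        · -- L' = r1 s : impossible
          exfalso
          have hbc' := hbc
          rw [hLs, r1, ← hd2] at hbc'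
          simp only [List.singleton_append] at hbc'
          rcases hsl : FreeMonoid.toList (s : FreeMonoid X) with _ | ⟨z, zs⟩
          · exact toList_coe_ne_nil T h1 s hsl
          · rw [hsl] at hbc'
            simp only [List.map_cons, List.cons_append, List.cons.injEq] at hbc'
            exact absurd hbc'.1 (by simp)
        · -- L' = r2 s
          have hbc' := hbc
          rw [hLs, r2, ← hd2] at hbc'
          simp only [List.singleton_append, List.cons.injEq] at hbc'
          have hst : s = t := Sum.inr.inj hbc'.1
          subst hst
          rw [hd1, ← hbc'.2]
  · -- L = r2 t
    have hab' : Sum.inr t :: (FreeMonoid.toList (t : FreeMonoid X)).map Sum.inl = a ++ b := by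
      rw [← hab, hLt, r2]
    cases a with
    | nil => exact absurd rfl ha
    | cons a0 a₀ =>
      simp only [List.cons_append, List.cons.injEq] at hab'
      obtain ⟨ha0, hta⟩ := hab'
      obtain ⟨t₁, t₂, htl, hat, hbt⟩ := List.map_eq_append_iff.mp hta
      have ht₂ : t₂ ≠ [] := by
        intro h0
        apply hb
        rw [← hbt, h0, List.map_nil]
      rcases hLs with hLs | hLs
      · -- L' = r1 s
        have hbc' : (FreeMonoid.toList (s : FreeMonoid X)).map Sum.inl ++ [Sum.inr s] =
            t₂.map Sum.inl ++ c := by rw [hbt, ← hbc, hLs, r1]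
        rcases List.append_eq_append_iff.mp hbc' with ⟨d, hd1', hd2'⟩ | ⟨d, hd1', hd2'⟩
        · -- hd1' : map inl t₂ = map inl sl ++ d, hd2' : [inr s] = d ++ c
          cases d with
          | cons d0 ds =>
            exfalso
            simp only [List.cons_append, List.cons.injEq] at hd2'
            rcases List.append_eq_nil_iff.mp hd2'.2.symm with ⟨-, hc0⟩
            exact hc hc0
          | nil =>
            rw [List.append_nil] at hd1'
            rw [List.nil_append] at hd2'
            have hsl : FreeMonoid.toList (s : FreeMonoid X) = t₂ := mapinl_inj hd1'.symm
            obtain ⟨ht1, -⟩ := no_overlap T hof htl (by rw [hsl, List.append_nil]) ht₂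
            have hts : t = s := coe_eq_of_toList T (by rw [hsl, htl, ht1, List.nil_append])
            subst hts
            have ha₀ : a₀ = [] := by rw [← hat, ht1, List.map_nil]
            rw [ha₀, ← ha0]
            exact hd2'
        · -- hd1' : map inl sl = map inl t₂ ++ d, hd2' : c = d ++ [inr s]
          obtain ⟨l₁, l₂, hsl, hl1, hl2⟩ := List.map_eq_append_iff.mp hd1'
          have hl1' : l₁ = t₂ := mapinl_inj hl1
          obtain ⟨ht1, hl2nil⟩ := no_overlap T hof htl (by rw [hsl, hl1']) ht₂
          have hts : t = s := coe_eq_of_toList T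
            (by rw [hsl, hl1', hl2nil, List.append_nil, htl, ht1, List.nil_append])
          subst hts
          have ha₀ : a₀ = [] := by rw [← hat, ht1, List.map_nil]
          rw [ha₀, ← ha0, hd2', ← hl2, hl2nil, List.map_nil, List.nil_append]
      · -- L' = r2 s : impossible
        exfalso
        have hbc' : Sum.inr s :: (FreeMonoid.toList (s : FreeMonoid X)).map Sum.inl =
            t₂.map Sum.inl ++ c := by rw [hbt, ← hbc, hLs, r2]
        cases t₂ with
        | nil => exact ht₂ rfl
        | cons z zs =>
          simp only [List.map_cons, List.cons_append, List.cons.injEq] at hbc'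
          exact absurd hbc'.1 (by simp)

end Rewriting2


/-! ### Stage 4 : strong confluence and the congruence -/

section Rewriting3

variable (T : Set (FreeMonoid X))

theorem confluence_aux (hof : OverlapFree T) (h1 : (1 : FreeMonoid X) ∉ T)
    {P L Q P' L' Q' aa : List (X ⊕ T)}
    (hL : IsRule T L) (hL' : IsRule T L') (hP' : P' = P ++ aa)
    (heq : L ++ Q = aa ++ (L' ++ Q')) :
    P ++ Q = P' ++ Q' ∨
      ∃ Y, Step T (FreeMonoid.ofList (P ++ Q)) (FreeMonoid.ofList Y) ∧
           Step T (FreeMonoid.ofList (P' ++ Q')) (FreeMonoid.ofList Y) := by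
  subst hP'
  rcases List.append_eq_append_iff.mp heq with ⟨d, hd1, hd2⟩ | ⟨d, hd1, hd2⟩
  · -- hd1 : aa = L ++ d, hd2 : Q = d ++ (L' ++ Q') : disjoint
    right
    refine ⟨P ++ (d ++ Q'), ⟨P ++ d, L', Q', hL', ?_, ?_⟩, ⟨P, L, d ++ Q', hL, ?_, ?_⟩⟩ <;>
      rw [FreeMonoid.toList_ofList] <;> simp [List.append_assoc, hd1, hd2]
  · -- hd1 : L = aa ++ d, hd2 : L' ++ Q' = d ++ Q
    rcases List.append_eq_append_iff.mp hd2 with ⟨e, he1, he2⟩ | ⟨e, he1, he2⟩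
    · -- he1 : d = L' ++ e, he2 : Q' = e ++ Q : containment
      left
      obtain ⟨h3, h4⟩ := rule_infix T hL hL' (show L = aa ++ L' ++ e by rw [hd1, he1]; simp)
      subst h3
      subst h4
      rw [List.nil_append] at he2
      rw [he2]
      simp
    · -- he1 : L' = d ++ e, he2 : Q = e ++ Q'
      by_cases hd0 : d = []
      · -- adjacent disjoint
        subst hd0
        rw [List.append_nil] at hd1
        rw [List.nil_append] at he1
        right
        refine ⟨P ++ Q', ⟨P, L', Q', hL', ?_, ?_⟩, ⟨P, L, Q', hL, ?_, ?_⟩⟩ <;>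
          rw [FreeMonoid.toList_ofList] <;> simp [List.append_assoc, hd1, he1, he2]
      · by_cases he0 : e = []
        · subst he0
          rw [List.append_nil] at he1
          obtain ⟨h3, -⟩ := rule_infix T hL hL'
            (show L = aa ++ L' ++ [] by rw [hd1, he1, List.append_nil])
          subst h3
          left
          rw [he2]
          simp
        · by_cases ha0 : aa = []
          · exfalso
            subst ha0
            rw [List.nil_append] at hd1
            obtain ⟨-, h4⟩ := rule_infix T hL' hL
              (show L' = [] ++ L ++ e by rw [he1, hd1]; simp)
            exact he0 h4
          · have hae : aa = e :=
              overlap_rules T hof h1 hL hL' hd1 he1 ha0 hd0 he0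
            left
            rw [he2, hae]
            simp

theorem strong_confluence (hof : OverlapFree T) (h1 : (1 : FreeMonoid X) ∉ T)
    {u v w : FreeMonoid (X ⊕ T)} (hv : Step T u v) (hw : Step T u w) :
    v = w ∨ ∃ x, Step T v x ∧ Step T w x := by
  obtain ⟨P, L, Q, hL, hu, hv'⟩ := hv
  obtain ⟨P', L', Q', hL', hu', hw'⟩ := hw
  have heq : P ++ (L ++ Q) = P' ++ (L' ++ Q') := by
    rw [← List.append_assoc, ← List.append_assoc, ← hu, ← hu']
  have hvv : v = FreeMonoid.ofList (P ++ Q) := by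
    rw [← FreeMonoid.ofList_toList v, hv']
  have hww : w = FreeMonoid.ofList (P' ++ Q') := by
    rw [← FreeMonoid.ofList_toList w, hw']
  subst hvv
  subst hww
  rcases List.append_eq_append_iff.mp heq with ⟨aa, h₁, h₂⟩ | ⟨aa, h₁, h₂⟩
  · rcases confluence_aux T hof h1 hL hL' h₁ h₂ with h | ⟨Y, s1, s2⟩
    · exact Or.inl (congrArg _ h)
    · exact Or.inr ⟨_, s1, s2⟩
  · rcases confluence_aux T hof h1 hL' hL h₁ h₂ with h | ⟨Y, s1, s2⟩
    · exact Or.inl (congrArg _ h).symm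
    · exact Or.inr ⟨_, s2, s1⟩

theorem join_step_equiv (hof : OverlapFree T) (h1 : (1 : FreeMonoid X) ∉ T) :
    Equivalence (Relation.Join (Relation.ReflTransGen (Step T))) := by
  have hsc : ∀ a b c : FreeMonoid (X ⊕ T), Step T a b → Step T a c →
      ∃ d, Relation.ReflGen (Step T) b d ∧ Relation.ReflTransGen (Step T) c d := by
    intro a b c hab hac
    rcases strong_confluence T hof h1 hab hac with h | ⟨x, h1x, h2x⟩
    · exact ⟨b, .refl, h ▸ .refl⟩
    · exact ⟨x, .single h1x, .single h2x⟩
  refine ⟨fun x => ⟨x, .refl, .refl⟩, ?_, ?_⟩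
  · rintro x y ⟨c, h1c, h2c⟩
    exact ⟨c, h2c, h1c⟩
  · rintro x y z ⟨c, hxc, hyc⟩ ⟨d, hyd, hzd⟩
    obtain ⟨e, hce, hde⟩ := Relation.church_rosser hsc hyc hyd
    exact ⟨e, hxc.trans hce, hzd.trans hde⟩

/-- The congruence given by joinability. -/
def stepCon (hof : OverlapFree T) (h1 : (1 : FreeMonoid X) ∉ T) : Con (FreeMonoid (X ⊕ T)) :=
  { r := Relation.Join (Relation.ReflTransGen (Step T))
    iseqv := join_step_equiv T hof h1
    mul' := by
      rintro a b c d ⟨e, hae, hbe⟩ ⟨f, hcf, hdf⟩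
      exact ⟨e * f, rtg_mul T hae hcf, rtg_mul T hbe hdf⟩ }

theorem step_rule_one {L : List (X ⊕ T)} (h : IsRule T L) :
    Step T (FreeMonoid.ofList L) 1 :=
  ⟨[], L, [], h, by simp [FreeMonoid.toList_ofList], rfl⟩

theorem invCon_le_stepCon (hof : OverlapFree T) (h1 : (1 : FreeMonoid X) ∉ T) :
    invCon T ≤ stepCon T hof h1 := by
  refine Con.conGen_le.2 ?_
  rintro x y (⟨t⟩ | ⟨t⟩)
  · refine ⟨1, Relation.ReflTransGen.single ?_, .refl⟩
    have := step_rule_one T ⟨t, Or.inl rfl⟩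
    rwa [ofList_r1] at this
  · refine ⟨1, Relation.ReflTransGen.single ?_, .refl⟩
    have := step_rule_one T ⟨t, Or.inr rfl⟩
    rwa [ofList_r2] at this

theorem mk'_eq_one_iff (hof : OverlapFree T) (h1 : (1 : FreeMonoid X) ∉ T)
    {u : FreeMonoid (X ⊕ T)} :
    (invCon T).mk' u = 1 ↔ Relation.ReflTransGen (Step T) u 1 := by
  constructor
  · intro h
    have h3 : (invCon T).mk' u = (invCon T).mk' 1 := by rw [h, map_one]
    have h2 : invCon T u 1 := by
      have h4 := (Con.ker_rel (invCon T).mk').mpr h3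
      rwa [Con.mk'_ker] at h4
    obtain ⟨c, hc1, hc2⟩ := invCon_le_stepCon T hof h1 h2
    rw [normal_of_rtg T (normal_one T) hc2] at hc1
    exact hc1
  · intro h
    exact (mk'_eq_of_rtg T h).trans (map_one _)

end Rewriting3

/-! ### Stage 5 : units are generated by the rules -/

theorem monoid_trick {M : Type*} [Monoid M] {α β p q : M}
    (hαβ : α * β = 1) (h3 : β * (q * (p * α)) = 1) : q * p = 1 := by
  calc q * p = 1 * (q * (p * 1)) := by simp
  _ = (α * β) * (q * (p * (α * β))) := by rw [hαβ]
  _ = α * ((β * (q * (p * α))) * β) := by simp [mul_assoc]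
  _ = 1 := by rw [h3, one_mul, hαβ]

theorem monoid_trick2 {M : Type*} [Monoid M] {α β p q : M} (hαβ : α * β = 1)
    (h2 : p * (α * (β * q)) = 1) : p * q = 1 := by
  rw [show α * (β * q) = (α * β) * q by simp [mul_assoc], hαβ, one_mul] at h2
  exact h2

theorem monoid_trick3 {M : Type*} [Monoid M] {α β p q : M} (hqp : q * p = 1)
    (h3 : β * (q * (p * α)) = 1) : β * α = 1 := by
  rw [show q * (p * α) = (q * p) * α by simp [mul_assoc], hqp, one_mul] at h3
  exact h3

section Rewriting4

variable (T : Set (FreeMonoid X))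

/-- The generators of the submonoid of `⟨X⟩ ⊕ T`-words corresponding to units. -/
def Gset : Set (FreeMonoid (X ⊕ T)) :=
  {g | ∃ t : T, g = emb T (t : FreeMonoid X) ∨ g = igen T t}

theorem ofList_map_inl (w : FreeMonoid X) :
    FreeMonoid.ofList ((FreeMonoid.toList w).map Sum.inl) = emb T w := rfl

theorem ofList_inr (t : T) : FreeMonoid.ofList [Sum.inr t] = igen T t := rfl

theorem toList_igen (t : T) : FreeMonoid.toList (igen T t) = [Sum.inr t] := rfl

theorem straddle {u z : FreeMonoid (X ⊕ T)} {P L Q : List (X ⊕ T)}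
    (hnu : Normal T u) (hnz : Normal T z) (hrule : IsRule T L)
    (h : FreeMonoid.toList u ++ FreeMonoid.toList z = P ++ L ++ Q) :
    ∃ a b, a ≠ [] ∧ b ≠ [] ∧ FreeMonoid.toList u = P ++ a ∧ FreeMonoid.toList z = b ++ Q ∧
      L = a ++ b := by
  rw [List.append_assoc] at h
  rcases List.append_eq_append_iff.mp h with ⟨a, ha1, ha2⟩ | ⟨a, ha1, ha2⟩
  · -- ha1 : P = toList u ++ a, ha2 : toList z = a ++ (L ++ Q)
    exfalso
    exact hnz ⟨a, L, Q, hrule, by rw [ha2]; simp⟩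
  · -- ha1 : toList u = P ++ a, ha2 : L ++ Q = a ++ toList z
    rcases List.append_eq_append_iff.mp ha2 with ⟨b, hb1, hb2⟩ | ⟨b, hb1, hb2⟩
    · -- hb1 : a = L ++ b, hb2 : Q = b ++ toList z
      exfalso
      exact hnu ⟨P, L, b, hrule, by rw [ha1, hb1]; simp⟩
    · -- hb1 : L = a ++ b, hb2 : toList z = b ++ Q
      have ha0 : a ≠ [] := by
        intro h0
        subst h0
        rw [List.nil_append] at hb1
        exact hnz ⟨[], L, Q, hrule, by rw [hb2, hb1]; simp⟩
      have hb0 : b ≠ [] := by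
        intro h0
        subst h0
        rw [List.append_nil] at hb1
        exact hnu ⟨P, L, [], hrule, by rw [ha1, hb1]; simp⟩
      exact ⟨a, b, ha0, hb0, ha1, hb2, hb1⟩

theorem normal_mid {t : T} {t₁ t₂ : List X}
    (h₁ : t₁.length < (FreeMonoid.toList (t : FreeMonoid X)).length)
    (h₂ : t₂.length < (FreeMonoid.toList (t : FreeMonoid X)).length) :
    Normal T (FreeMonoid.ofList (t₂.map Sum.inl ++ Sum.inr t :: t₁.map Sum.inl)) := by
  rintro ⟨P, L, Q, ⟨s, hLs⟩, h⟩
  rw [FreeMonoid.toList_ofList] at h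
  rcases hLs with hLs | hLs
  · -- L = r1 s
    have h' : t₂.map Sum.inl ++ Sum.inr t :: t₁.map Sum.inl =
        (P ++ (FreeMonoid.toList (s : FreeMonoid X)).map Sum.inl) ++ Sum.inr s :: Q := by
      rw [h, hLs, r1]; simp
    rcases left_prefix_inr _ _ _ _ _ _ (by simp) (by simp) (by simp) h' with
      ⟨hp, hrr, -⟩ | ⟨m, -, hm2⟩
    · have hst : s = t := Sum.inr.inj hrr
      subst hst
      have hlp := congrArg List.length hp
      simp only [List.length_append, List.length_map] at hlp
      omega
    · have hmem : (Sum.inr s : X ⊕ T) ∈ t₁.map Sum.inl := by rw [hm2]; simp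
      obtain ⟨x, -, hx⟩ := List.mem_map.mp hmem
      exact absurd hx (by simp)
  · -- L = r2 s
    have h' : t₂.map Sum.inl ++ Sum.inr t :: t₁.map Sum.inl =
        P ++ Sum.inr s :: ((FreeMonoid.toList (s : FreeMonoid X)).map Sum.inl ++ Q) := by
      rw [h, hLs, r2]; simp
    rcases left_prefix_inr _ _ _ _ _ _ (by simp) (by simp) (by simp) h' with
      ⟨-, hrr, hq⟩ | ⟨m, -, hm2⟩
    · have hst : s = t := Sum.inr.inj hrr
      subst hst
      have hlq := congrArg List.length hq
      simp only [List.length_append, List.length_map] at hlq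
      omega
    · have hmem : (Sum.inr s : X ⊕ T) ∈ t₁.map Sum.inl := by rw [hm2]; simp
      obtain ⟨x, -, hx⟩ := List.mem_map.mp hmem
      exact absurd hx (by simp)

theorem bad_case_contradiction (hof : OverlapFree T) (h1 : (1 : FreeMonoid X) ∉ T)
    {t : T} {t₁ t₂ : List X} (ht1 : t₁ ≠ []) (ht2 : t₂ ≠ [])
    (htl : FreeMonoid.toList (t : FreeMonoid X) = t₁ ++ t₂)
    (hmk : (invCon T).mk'
      (FreeMonoid.ofList (t₂.map Sum.inl ++ Sum.inr t :: t₁.map Sum.inl)) = 1) :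
    False := by
  have hl1 : t₁.length < (FreeMonoid.toList (t : FreeMonoid X)).length := by
    rw [htl, List.length_append]
    have := List.length_pos_iff.mpr ht2
    omega
  have hl2 : t₂.length < (FreeMonoid.toList (t : FreeMonoid X)).length := by
    rw [htl, List.length_append]
    have := List.length_pos_iff.mpr ht1
    omega
  have hred := (mk'_eq_one_iff T hof h1).mp hmk
  have heq1 := normal_of_rtg T (normal_mid T hl1 hl2) hred
  have := congrArg FreeMonoid.toList heq1
  rw [FreeMonoid.toList_one, FreeMonoid.toList_ofList] at this
  rcases List.append_eq_nil_iff.mp this.symm with ⟨-, h2⟩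
  simp at h2

theorem core (hof : OverlapFree T) (h1 : (1 : FreeMonoid X) ∉ T) :
    ∀ n : ℕ, ∀ u z : FreeMonoid (X ⊕ T),
      (FreeMonoid.toList u).length + (FreeMonoid.toList z).length ≤ n →
      Normal T u → Normal T z →
      (invCon T).mk' (u * z) = 1 → (invCon T).mk' (z * u) = 1 →
      u ∈ Submonoid.closure (Gset T) ∧ z ∈ Submonoid.closure (Gset T) := by
  intro n
  induction n using Nat.strong_induction_on with
  | _ n ih =>
  intro u z hlen hnu hnz huz hzu
  by_cases hu0 : FreeMonoid.toList u = []
  · have hu1 : u = 1 := by rw [← FreeMonoid.ofList_toList u, hu0]; rfl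
    subst hu1
    have hz1 : z = 1 := by
      have h := (mk'_eq_one_iff T hof h1).mp (by rw [one_mul] at huz; exact huz)
      exact (normal_of_rtg T hnz h).symm
    subst hz1
    exact ⟨one_mem _, one_mem _⟩
  by_cases hz0 : FreeMonoid.toList z = []
  · have hz1 : z = 1 := by rw [← FreeMonoid.ofList_toList z, hz0]; rfl
    subst hz1
    have hu1 : u = 1 := by
      have h := (mk'_eq_one_iff T hof h1).mp (by rw [mul_one] at huz; exact huz)
      exact (normal_of_rtg T hnu h).symm
    subst hu1
    exact ⟨one_mem _, one_mem _⟩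
  -- both nonempty : find the straddling redex
  have hne : u * z ≠ 1 := by
    intro h0
    apply hu0
    have h0' := congrArg FreeMonoid.toList h0
    rw [FreeMonoid.toList_mul, FreeMonoid.toList_one] at h0'
    exact (List.append_eq_nil_iff.mp h0').1
  have hred : Relation.ReflTransGen (Step T) (u * z) 1 := (mk'_eq_one_iff T hof h1).mp huz
  rcases hred.cases_head with heq | ⟨c, hstep, -⟩
  · exact absurd heq hne
  obtain ⟨P, L, Q, hrule, hPLQ, -⟩ := hstep
  rw [FreeMonoid.toList_mul] at hPLQ
  obtain ⟨a, b, ha0, hb0, hua, hzb, hLab⟩ := straddle T hnu hnz hrule hPLQ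
  have hu_eq : u = FreeMonoid.ofList P * FreeMonoid.ofList a := by
    rw [← FreeMonoid.ofList_append, ← hua, FreeMonoid.ofList_toList]
  have hz_eq : z = FreeMonoid.ofList b * FreeMonoid.ofList Q := by
    rw [← FreeMonoid.ofList_append, ← hzb, FreeMonoid.ofList_toList]
  have hαβ : (invCon T).mk' (FreeMonoid.ofList a) * (invCon T).mk' (FreeMonoid.ofList b) = 1 := by
    rw [← map_mul, ← FreeMonoid.ofList_append, ← hLab]
    exact (mk'_eq_of_step T (step_rule_one T hrule)).trans (map_one _)
  have h2 : (invCon T).mk' (FreeMonoid.ofList P) * ((invCon T).mk' (FreeMonoid.ofList a) *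
      ((invCon T).mk' (FreeMonoid.ofList b) * (invCon T).mk' (FreeMonoid.ofList Q))) = 1 := by
    have hh := huz
    rw [hu_eq, hz_eq] at hh
    simpa only [map_mul, mul_assoc] using hh
  have h3 : (invCon T).mk' (FreeMonoid.ofList b) * ((invCon T).mk' (FreeMonoid.ofList Q) *
      ((invCon T).mk' (FreeMonoid.ofList P) * (invCon T).mk' (FreeMonoid.ofList a))) = 1 := by
    have hh := hzu
    rw [hu_eq, hz_eq] at hh
    simpa only [map_mul, mul_assoc] using hh
  have hqp : (invCon T).mk' (FreeMonoid.ofList Q) * (invCon T).mk' (FreeMonoid.ofList P) = 1 :=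
    monoid_trick hαβ h3
  have hpq : (invCon T).mk' (FreeMonoid.ofList P) * (invCon T).mk' (FreeMonoid.ofList Q) = 1 :=
    monoid_trick2 hαβ h2
  have hβα : (invCon T).mk' (FreeMonoid.ofList b) * (invCon T).mk' (FreeMonoid.ofList a) = 1 :=
    monoid_trick3 hqp h3
  have hnP := (normal_split T hua hnu).1
  have hnQ := (normal_split T hzb hnz).2
  have hlens : P.length + Q.length < n := by
    have h1l := congrArg List.length hua
    have h2l := congrArg List.length hzb
    simp only [List.length_append] at h1l h2l
    have ha1 := List.length_pos_iff.mpr ha0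
    have hb1 := List.length_pos_iff.mpr hb0
    omega
  obtain ⟨hP, hQ⟩ := ih _ hlens (FreeMonoid.ofList P) (FreeMonoid.ofList Q)
    (by rw [FreeMonoid.toList_ofList, FreeMonoid.toList_ofList]) hnP hnQ
    (by rw [map_mul]; exact hpq) (by rw [map_mul]; exact hqp)
  -- now split on the shape of the rule
  have hba : (invCon T).mk' (FreeMonoid.ofList (b ++ a)) = 1 := by
    rw [FreeMonoid.ofList_append, map_mul]
    exact hβα
  obtain ⟨t, hLt | hLt⟩ := hrule
  · -- L = r1 t
    have hab' : a ++ b = (FreeMonoid.toList (t : FreeMonoid X)).map Sum.inl ++ [Sum.inr t] := by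
      rw [← hLab, hLt, r1]
    have hgood : a = (FreeMonoid.toList (t : FreeMonoid X)).map Sum.inl ∧ b = [Sum.inr t] := by
      rcases List.append_eq_append_iff.mp hab' with ⟨d, hd1, hd2⟩ | ⟨d, hd1, hd2⟩
      · -- hd1 : map inl tl = a ++ d, hd2 : b = d ++ [inr t]
        obtain ⟨t₁, t₂, htl, hat, hdt⟩ := List.map_eq_append_iff.mp hd1
        by_cases ht₂ : t₂ = []
        · subst ht₂
          rw [List.map_nil] at hdt
          rw [List.append_nil] at htl
          rw [← hdt, List.nil_append] at hd2
          exact ⟨by rw [← hat, htl], hd2⟩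
        · exfalso
          have ht₁ : t₁ ≠ [] := by
            intro h0
            apply ha0
            rw [← hat, h0, List.map_nil]
          refine bad_case_contradiction T hof h1 ht₁ ht₂ htl ?_
          rw [show t₂.map Sum.inl ++ Sum.inr t :: t₁.map Sum.inl = b ++ a by
            rw [hd2, ← hdt, ← hat]; simp]
          exact hba
      · -- hd1 : a = map inl tl ++ d, hd2 : [inr t] = d ++ b
        cases d with
        | cons d0 ds =>
          exfalso
          simp only [List.cons_append, List.cons.injEq] at hd2
          rcases List.append_eq_nil_iff.mp hd2.2.symm with ⟨-, hb00⟩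
          exact hb0 hb00
        | nil =>
          rw [List.append_nil] at hd1
          rw [List.nil_append] at hd2
          exact ⟨hd1, hd2.symm⟩
    refine ⟨?_, ?_⟩
    · rw [hu_eq, hgood.1, ofList_map_inl]
      exact mul_mem hP (Submonoid.subset_closure ⟨t, Or.inl rfl⟩)
    · rw [hz_eq, hgood.2, ofList_inr]
      exact mul_mem (Submonoid.subset_closure ⟨t, Or.inr rfl⟩) hQ
  · -- L = r2 t
    have hab' : Sum.inr t :: (FreeMonoid.toList (t : FreeMonoid X)).map Sum.inl = a ++ b := by
      rw [← hLab, hLt, r2]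
    have hgood : a = [Sum.inr t] ∧ b = (FreeMonoid.toList (t : FreeMonoid X)).map Sum.inl := by
      cases ha : a with
      | nil => exact absurd ha ha0
      | cons a0 a₀ =>
        rw [ha] at hab'
        simp only [List.cons_append, List.cons.injEq] at hab'
        obtain ⟨ha00, hta⟩ := hab'
        obtain ⟨t₁, t₂, htl, hat, hbt⟩ := List.map_eq_append_iff.mp hta
        by_cases ht₁ : t₁ = []
        · subst ht₁
          rw [List.map_nil] at hat
          rw [List.nil_append] at htl
          exact ⟨by rw [← ha00, ← hat], by rw [← hbt, htl]⟩
        · exfalso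
          have ht₂ : t₂ ≠ [] := by
            intro h0
            apply hb0
            rw [← hbt, h0, List.map_nil]
          refine bad_case_contradiction T hof h1 ht₁ ht₂ htl ?_
          rw [show t₂.map Sum.inl ++ Sum.inr t :: t₁.map Sum.inl = b ++ a by
            rw [ha, ← hbt, ← hat, ← ha00]]
          exact hba
    refine ⟨?_, ?_⟩
    · rw [hu_eq, hgood.1, ofList_inr]
      exact mul_mem hP (Submonoid.subset_closure ⟨t, Or.inr rfl⟩)
    · rw [hz_eq, hgood.2, ofList_map_inl]
      exact mul_mem (Submonoid.subset_closure ⟨t, Or.inl rfl⟩) hQ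

theorem emb_mem_closure (l : List (FreeMonoid (X ⊕ T))) (hl : ∀ y ∈ l, y ∈ Gset T) :
    ∀ w : FreeMonoid X, l.prod = emb T w → w ∈ Submonoid.closure T := by
  induction l with
  | nil =>
    intro w hw
    have hw1 : w = 1 := by
      have h := congrArg FreeMonoid.toList hw
      rw [List.prod_nil, FreeMonoid.toList_one, toList_emb] at h
      have : FreeMonoid.toList w = [] := by
        rcases List.map_eq_nil_iff.mp h.symm with h'
        exact h'
      rw [← FreeMonoid.ofList_toList w, this]
      rfl
    rw [hw1]
    exact one_mem _
  | cons g l ihl =>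
    intro w hw
    rw [List.prod_cons] at hw
    obtain ⟨t, hg | hg⟩ := hl g (List.mem_cons_self)
    · subst hg
      have h' : (FreeMonoid.toList (t : FreeMonoid X)).map Sum.inl ++
          FreeMonoid.toList l.prod = (FreeMonoid.toList w).map Sum.inl := by
        rw [← toList_emb, ← FreeMonoid.toList_mul, hw, toList_emb]
      obtain ⟨l₁, l₂, hw12, hl1, hl2⟩ := List.append_eq_map_iff.mp h'
      have hl₁ : l₁ = FreeMonoid.toList (t : FreeMonoid X) := mapinl_inj hl1
      have hprod : l.prod = emb T (FreeMonoid.ofList l₂) := by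
        rw [← FreeMonoid.ofList_toList l.prod, ← hl2, ← ofList_map_inl T,
          FreeMonoid.toList_ofList]
      have hrec := ihl (fun y hy => hl y (List.mem_cons_of_mem _ hy)) _ hprod
      have hw' : w = (t : FreeMonoid X) * FreeMonoid.ofList l₂ := by
        rw [← FreeMonoid.ofList_toList w, hw12, hl₁, FreeMonoid.ofList_append]
        rw [FreeMonoid.ofList_toList]
      rw [hw']
      exact mul_mem (Submonoid.subset_closure t.2) hrec
    · subst hg
      exfalso
      have h := congrArg FreeMonoid.toList hw
      rw [FreeMonoid.toList_mul, toList_emb, toList_igen] at h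
      have hmem : (Sum.inr t : X ⊕ T) ∈ (FreeMonoid.toList w).map Sum.inl := by
        rw [← h]
        simp
      obtain ⟨x, -, hx⟩ := List.mem_map.mp hmem
      exact absurd hx (by simp)

theorem mem_closure_of_isUnit (hof : OverlapFree T) (h1 : (1 : FreeMonoid X) ∉ T)
    {w : FreeMonoid X} (h : IsUnit (natHom T w)) : w ∈ Submonoid.closure T := by
  obtain ⟨z₀, hz₀⟩ := Con.mk'_surjective (c := invCon T) (↑h.unit⁻¹ : AdjInv T)
  obtain ⟨z, hz, hnz⟩ := exists_normal T z₀
  have hmkz : (invCon T).mk' z = (↑h.unit⁻¹ : AdjInv T) := (mk'_eq_of_rtg T hz).symm.trans hz₀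
  have huz : (invCon T).mk' (emb T w * z) = 1 := by
    rw [map_mul, hmkz, ← natHom_apply]
    exact h.mul_val_inv
  have hzu : (invCon T).mk' (z * emb T w) = 1 := by
    rw [map_mul, hmkz, ← natHom_apply]
    exact h.val_inv_mul
  obtain ⟨hmem, -⟩ := core T hof h1
    ((FreeMonoid.toList (emb T w)).length + (FreeMonoid.toList z).length)
    (emb T w) z le_rfl (normal_emb T w) hnz huz hzu
  obtain ⟨l, hlmem, hlprod⟩ := Submonoid.exists_list_of_mem_closure hmem
  exact emb_mem_closure T l hlmem w hlprod

end Rewriting4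

/-! ### Stage 6 : properties of the distinguished set `D` and the main theorem -/

theorem toList_ne_nil {w : FreeMonoid X} (h : w ≠ 1) : FreeMonoid.toList w ≠ [] :=
  fun h0 => h (by rw [← FreeMonoid.ofList_toList w, h0]; rfl)

theorem mul_ne_one_right {u v : FreeMonoid X} (hv : v ≠ 1) : u * v ≠ 1 := by
  intro h
  apply hv
  have h' := congrArg FreeMonoid.toList h
  rw [FreeMonoid.toList_mul, FreeMonoid.toList_one] at h'
  have h2 := (List.append_eq_nil_iff.mp h').2
  rw [← FreeMonoid.ofList_toList v, h2]
  rfl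

theorem isUnit_of_mem_closure {E S' : Set (FreeMonoid X)}
    (hE : ∀ d ∈ E, IsUnit (natHom S' d)) {w : FreeMonoid X}
    (hw : w ∈ Submonoid.closure E) : IsUnit (natHom S' w) := by
  induction hw using Submonoid.closure_induction with
  | mem x hx => exact hE x hx
  | one => rw [map_one]; exact isUnit_one
  | mul x y hx hy ihx ihy => rw [map_mul]; exact ihx.mul ihy

theorem units_mem_closure_D (S : Set (FreeMonoid X)) :
    ∀ n : ℕ, ∀ w : FreeMonoid X, (FreeMonoid.toList w).length ≤ n → IsUnit (natHom S w) →
      w ∈ Submonoid.closure {w : FreeMonoid X | w ≠ 1 ∧ IsUnit (natHom S w) ∧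
        ¬∃ u v : FreeMonoid X, u ≠ 1 ∧ v ≠ 1 ∧
          IsUnit (natHom S u) ∧ IsUnit (natHom S v) ∧ w = u * v} := by
  intro n
  induction n with
  | zero =>
    intro w hlen hU
    have hw1 : w = 1 := by
      have h0 : FreeMonoid.toList w = [] := List.eq_nil_of_length_eq_zero (Nat.le_zero.mp hlen)
      rw [← FreeMonoid.ofList_toList w, h0]; rfl
    rw [hw1]
    exact one_mem _
  | succ n ihn =>
    intro w hlen hU
    by_cases hw1 : w = 1
    · rw [hw1]; exact one_mem _
    by_cases hmin : ∃ u v : FreeMonoid X, u ≠ 1 ∧ v ≠ 1 ∧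
        IsUnit (natHom S u) ∧ IsUnit (natHom S v) ∧ w = u * v
    · obtain ⟨u, v, hu1, hv1, hUu, hUv, rfl⟩ := hmin
      have hlen' := hlen
      rw [FreeMonoid.toList_mul, List.length_append] at hlen'
      have hu' := List.length_pos_iff.mpr (toList_ne_nil hu1)
      have hv' := List.length_pos_iff.mpr (toList_ne_nil hv1)
      exact mul_mem (ihn u (by omega) hUu) (ihn v (by omega) hUv)
    · exact Submonoid.subset_closure ⟨hw1, hU, hmin⟩

theorem overlapFree_D (S : Set (FreeMonoid X)) :
    OverlapFree {w : FreeMonoid X | w ≠ 1 ∧ IsUnit (natHom S w) ∧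
      ¬∃ u v : FreeMonoid X, u ≠ 1 ∧ v ≠ 1 ∧
        IsUnit (natHom S u) ∧ IsUnit (natHom S v) ∧ w = u * v} := by
  rintro u hu v hv ⟨a, b, c, hb, hac, hu_eq, hv_eq⟩
  obtain ⟨hu1, hUu, humin⟩ := hu
  obtain ⟨hv1, hUv, hvmin⟩ := hv
  have hUab : IsUnit (natHom S (a * b)) := hu_eq ▸ hUu
  have hUbc : IsUnit (natHom S (b * c)) := hv_eq ▸ hUv
  -- b has a left inverse and a right inverse, hence is a unit
  set l : AdjInv S := (↑hUab.unit⁻¹ : AdjInv S) * natHom S a with hl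
  set r : AdjInv S := natHom S c * (↑hUbc.unit⁻¹ : AdjInv S) with hr
  have hlB : l * natHom S b = 1 := by
    rw [hl, mul_assoc, ← map_mul]
    exact hUab.val_inv_mul
  have hBr : natHom S b * r = 1 := by
    rw [hr, ← mul_assoc, ← map_mul]
    exact hUbc.mul_val_inv
  have hlr : l = r := by
    calc l = l * (natHom S b * r) := by rw [hBr, mul_one]
    _ = (l * natHom S b) * r := (mul_assoc _ _ _).symm
    _ = r := by rw [hlB, one_mul]
  have hB : IsUnit (natHom S b) := ⟨⟨natHom S b, r, hBr, by rw [← hlr]; exact hlB⟩, rfl⟩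
  have hA : IsUnit (natHom S a) := by
    have ha_eq : natHom S a = natHom S (a * b) * (↑hB.unit⁻¹ : AdjInv S) := by
      rw [map_mul, mul_assoc, hB.mul_val_inv, mul_one]
    rw [ha_eq]
    exact hUab.mul (Units.isUnit _)
  have hC : IsUnit (natHom S c) := by
    have hc_eq : natHom S c = (↑hB.unit⁻¹ : AdjInv S) * natHom S (b * c) := by
      rw [map_mul, ← mul_assoc, hB.val_inv_mul, one_mul]
    rw [hc_eq]
    exact (Units.isUnit _).mul hUbc
  by_cases ha1 : a = 1
  · have hc1 : c ≠ 1 := by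
      rcases hac with h | h
      · exact absurd ha1 h
      · exact h
    apply hvmin
    exact ⟨b, c, hb, hc1, hB, hC, hv_eq⟩
  · apply humin
    exact ⟨a, b, ha1, hb, hA, hB, hu_eq⟩

/-- for an arbitrary `S` there is exactly one overlap-free subset of
`⟨X⟩ \ {1}` inverse-equivalent to `S`, namely the described set `D`. -/
theorem stmt17 (X : Type*) (S : Set (FreeMonoid X)) (D : Set (FreeMonoid X))
    (hD : D = {w : FreeMonoid X | w ≠ 1 ∧ IsUnit (natHom S w) ∧
      ¬∃ u v : FreeMonoid X, u ≠ 1 ∧ v ≠ 1 ∧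
        IsUnit (natHom S u) ∧ IsUnit (natHom S v) ∧ w = u * v}) :
    ((1 : FreeMonoid X) ∉ D ∧ OverlapFree D ∧ InvEquiv S D) ∧
    ∀ T : Set (FreeMonoid X),
      (1 : FreeMonoid X) ∉ T → OverlapFree T → InvEquiv S T → T = D := by
  subst hD
  constructor
  · refine ⟨?_, ?_, ?_, ?_⟩
    · rintro ⟨h1, -⟩
      exact h1 rfl
    · exact overlapFree_D S
    · rintro w ⟨-, hU, -⟩
      exact hU
    · intro s hs
      have hUs : IsUnit (natHom S s) := isUnit_natHom_of_mem hs
      have hcl := units_mem_closure_D S (FreeMonoid.toList s).length s le_rfl hUs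
      exact isUnit_of_mem_closure (fun d hd => isUnit_natHom_of_mem hd) hcl
  · rintro T hT1 hTof ⟨hTS, hST⟩
    have trST : ∀ {w : FreeMonoid X}, IsUnit (natHom S w) → IsUnit (natHom T w) :=
      fun hw => transfer_isUnit hST hw
    have hClUnit : ∀ {w : FreeMonoid X}, w ∈ Submonoid.closure T → IsUnit (natHom S w) :=
      fun hw => isUnit_of_mem_closure hTS hw
    ext x
    constructor
    · intro hx
      refine ⟨fun h => hT1 (h ▸ hx), hTS x hx, ?_⟩
      rintro ⟨u, v, hu1, hv1, hUu, hUv, hxuv⟩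
      have hucl : u ∈ Submonoid.closure T := mem_closure_of_isUnit T hTof hT1 (trST hUu)
      obtain ⟨l, hlm, hlp⟩ := Submonoid.exists_list_of_mem_closure hucl
      cases l with
      | nil => exact hu1 (by rw [← hlp, List.prod_nil])
      | cons t₁ l' =>
        rw [List.prod_cons] at hlp
        have ht₁T : t₁ ∈ T := hlm t₁ (List.mem_cons_self)
        apply hTof t₁ ht₁T x hx
        refine ⟨1, t₁, l'.prod * v, fun h => hT1 (h ▸ ht₁T), Or.inr (mul_ne_one_right hv1),
          (one_mul t₁).symm, ?_⟩
        rw [hxuv, ← hlp, mul_assoc]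
    · rintro ⟨hx1, hxU, hxmin⟩
      have hxcl : x ∈ Submonoid.closure T := mem_closure_of_isUnit T hTof hT1 (trST hxU)
      obtain ⟨l, hlm, hlp⟩ := Submonoid.exists_list_of_mem_closure hxcl
      cases l with
      | nil => exact absurd (by rw [← hlp, List.prod_nil]) hx1
      | cons t₁ l' =>
        rw [List.prod_cons] at hlp
        have ht₁T : t₁ ∈ T := hlm _ (List.mem_cons_self)
        by_cases hl' : l'.prod = 1
        · rw [hl', mul_one] at hlp
          rw [← hlp]
          exact ht₁T
        · exfalso
          apply hxmin
          refine ⟨t₁, l'.prod, fun h => hT1 (h ▸ ht₁T), hl', hTS _ ht₁T, ?_, hlp.symm⟩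
          exact hClUnit (Submonoid.list_prod_mem _
            (fun y hy => Submonoid.subset_closure (hlm y (List.mem_cons_of_mem _ hy))))


end AdjoinInverses
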